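/- If A is a Rees algebra and B is its differential closure, then ord_A(p) = ord_B(p) for all p in the common singular locus; more precisely, for any rational q ≥ 1, the set of points of the singular locus with ord_A ≥ q equals the set with ord_B ≥ q. -/

import Mathlib

/-- The order of an ideal `I` in a local ring: the largest `n` with `I ⊆ m^n`. -/
noncomputable def idealOrd {R : Type*} [CommRing R] [IsLocalRing R] (I : Ideal R) : ℕ∞ :=
  ⨆ n ∈ {n : ℕ | I ≤ IsLocalRing.maximalIdeal R ^ n}, (n : ℕ∞)

/-- `Δ(I)`: the ideal generated by `I` together with all first-order derivatives
of sections of `I` (over the base `k`). -/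
noncomputable def deltaIdeal (k : Type*) {R : Type*} [CommRing k] [CommRing R] [Algebra k R]
    (I : Ideal R) : Ideal R :=
  I ⊔ Ideal.span {x | ∃ (D : Derivation k R R) (a : R), a ∈ I ∧ D a = x}

/-- Iterated `Δ` operator. -/
noncomputable def deltaIter (k : Type*) {R : Type*} [CommRing k] [CommRing R] [Algebra k R] :
    ℕ → Ideal R → Ideal R
  | 0, I => I
  | j + 1, I => deltaIdeal k (deltaIter k j I)

/-- The Rees algebra generated by a family `G` of ideals, `G d` sitting in degree `d`. -/
noncomputable def reesGen {R : Type*} [CommRing R] (G : ℕ → Ideal R) : ℕ → Ideal R := fun i =>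
  if i = 0 then ⊤ else
    ⨆ (s : Multiset ℕ) (_ : s.sum = i) (_ : 0 ∉ s), (s.map G).prod

/-- `A` is generated in the degrees of the finite set `K`. -/
def HasGeneratingDegrees {R : Type*} [CommRing R] (A : ℕ → Ideal R) (K : Finset ℕ) : Prop :=
  ∀ i : ℕ, 0 < i →
    A i = ⨆ (s : Multiset ℕ) (_ : ∀ j ∈ s, j ∈ K) (_ : s.sum = i), (s.map A).prod

open IsLocalRing

section Aux

lemma my_idealOrd_ge {R : Type*} [CommRing R] [IsLocalRing R] (I : Ideal R) (s : ℕ) :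
    (s : ℕ∞) ≤ idealOrd I ↔ I ≤ maximalIdeal R ^ s := by
  constructor
  · intro h
    by_contra hc
    have hs : s ≠ 0 := by rintro rfl; simp at hc
    obtain ⟨t, rfl⟩ := Nat.exists_eq_succ_of_ne_zero hs
    have hub : idealOrd I ≤ (t : ℕ∞) := by
      refine iSup₂_le fun n hn => ?_
      have : n ≤ t := by
        by_contra hnt
        exact hc (le_trans hn (Ideal.pow_le_pow_right (by omega)))
      exact_mod_cast this
    have h2 := h.trans hub
    have : t + 1 ≤ t := by exact_mod_cast h2
    omega
  · intro h
    exact le_iSup₂_of_le s (show s ∈ {n : ℕ | I ≤ maximalIdeal R ^ n} from h) le_rfl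

lemma my_ceil_le_iff {b : ℕ} (hb : 0 < b) (c x : ℕ) : (c + b - 1) / b ≤ x ↔ c ≤ b * x := by
  rw [Nat.div_le_iff_le_mul_add_pred hb]
  set X := b * x with hX
  omega

lemma my_cast_mul_le {b : ℕ} (hb : 0 < b) (c : ℕ) (o : ℕ∞) :
    (c : ℕ∞) ≤ (b : ℕ∞) * o ↔ (((c + b - 1) / b : ℕ) : ℕ∞) ≤ o := by
  induction o using ENat.recTopCoe with
  | top =>
    simp [ENat.mul_top (show (b : ℕ∞) ≠ 0 by exact_mod_cast hb.ne')]
  | coe m =>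
    norm_cast
    exact (my_ceil_le_iff hb c m).symm


lemma my_deriv_mem {k R : Type*} [CommRing k] [CommRing R] [IsLocalRing R] [Algebra k R]
    (D : Derivation k R R) :
    ∀ t : ℕ, ∀ x ∈ (maximalIdeal R) ^ (t + 1), D x ∈ (maximalIdeal R) ^ t := by
  intro t
  induction t with
  | zero => intro x _; simp
  | succ t ih =>
    intro x hx
    rw [pow_succ] at hx
    refine Submodule.mul_induction_on hx ?_ ?_
    · intro p hp q hq
      rw [Derivation.leibniz, smul_eq_mul, smul_eq_mul]
      refine Ideal.add_mem _ (Ideal.mul_mem_right _ _ hp) ?_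
      rw [pow_succ']
      exact Ideal.mul_mem_mul hq (ih p hp)
    · intro p q hp hq
      rw [map_add]
      exact Ideal.add_mem _ hp hq

lemma my_delta_le {k R : Type*} [CommRing k] [CommRing R] [IsLocalRing R] [Algebra k R]
    (I : Ideal R) (t : ℕ) (h : I ≤ (maximalIdeal R) ^ (t + 1)) :
    deltaIdeal k I ≤ (maximalIdeal R) ^ t := by
  refine sup_le (h.trans (Ideal.pow_le_pow_right (Nat.le_succ t))) ?_
  rw [Ideal.span_le]
  rintro x ⟨D, a, ha, rfl⟩
  exact my_deriv_mem D t a (h ha)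

lemma my_deltaIter_le {k R : Type*} [CommRing k] [CommRing R] [IsLocalRing R] [Algebra k R]
    (j s : ℕ) (I : Ideal R) (h : I ≤ (maximalIdeal R) ^ s) :
    deltaIter k j I ≤ (maximalIdeal R) ^ (s - j) := by
  induction j with
  | zero => simpa [deltaIter] using h
  | succ j ih =>
    show deltaIdeal k (deltaIter k j I) ≤ _
    rcases Nat.eq_zero_or_pos (s - j) with h0 | hp
    · have he : s - (j + 1) = 0 := by omega
      rw [he, pow_zero, Ideal.one_eq_top]
      exact le_top
    · obtain ⟨u, hu⟩ : ∃ u, s - j = u + 1 := ⟨s - j - 1, by omega⟩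
      have he : s - (j + 1) = u := by omega
      rw [he]
      exact my_delta_le _ u (le_of_le_of_eq ih (by rw [hu]))

lemma my_prod_le_pow {R : Type*} [CommRing R] [IsLocalRing R]
    (G : ℕ → Ideal R) (f : ℕ → ℕ) (t : Multiset ℕ)
    (h : ∀ d ∈ t, G d ≤ (maximalIdeal R) ^ f d) :
    (t.map G).prod ≤ (maximalIdeal R) ^ (t.map f).sum := by
  induction t using Multiset.induction with
  | empty => simp
  | cons d t ih =>
    simp only [Multiset.map_cons, Multiset.prod_cons, Multiset.sum_cons, pow_add]
    exact Ideal.mul_mono (h d (Multiset.mem_cons_self d t))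
      (ih fun e he => h e (Multiset.mem_cons_of_mem he))

lemma my_prod_mono {R : Type*} [CommRing R] (F G : ℕ → Ideal R) (t : Multiset ℕ)
    (h : ∀ d ∈ t, F d ≤ G d) : (t.map F).prod ≤ (t.map G).prod := by
  induction t using Multiset.induction with
  | empty => simp
  | cons d t ih =>
    simp only [Multiset.map_cons, Multiset.prod_cons]
    exact Ideal.mul_mono (h d (Multiset.mem_cons_self d t))
      (ih fun e he => h e (Multiset.mem_cons_of_mem he))

lemma my_ceil_superadd {a b : ℕ} (hb : 0 < b) (t : Multiset ℕ) :
    (a * t.sum + b - 1) / b ≤ (t.map (fun d => (a * d + b - 1) / b)).sum := by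
  induction t using Multiset.induction with
  | empty =>
    simp only [Multiset.sum_zero, Multiset.map_zero, Nat.mul_zero, Nat.zero_add]
    exact Nat.le_of_eq (Nat.div_eq_of_lt (by omega))
  | cons d t ih =>
    simp only [Multiset.map_cons, Multiset.sum_cons]
    rw [my_ceil_le_iff hb] at ih ⊢
    have h1 : a * d ≤ b * ((a * d + b - 1) / b) := (my_ceil_le_iff hb _ _).mp le_rfl
    rw [Nat.mul_add, Nat.mul_add]
    exact Nat.add_le_add h1 ih

end Aux

/-- a Rees algebra `A` and its differential closure `B` have the
same order on the common singular locus; precisely, at any point `p` (local ring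
`R = O_{W,p}`), for any rational `q = a/b ≥ 1`, one has `ord_A(p) ≥ q` iff
`ord_B(p) ≥ q`, where `ord_A(p) ≥ q` means `ord_p(A i) ≥ q·i` for all `i > 0`. -/
theorem differential_closure_same_order
    {k R : Type*} [Field k] [CharZero k] [CommRing R] [IsLocalRing R] [Algebra k R]
    (A : ℕ → Ideal R) (hA0 : A 0 = ⊤) (hAmul : ∀ i j, A i * A j ≤ A (i + j))
    (K : Finset ℕ) (hKpos : ∀ j ∈ K, 0 < j) (hgen : HasGeneratingDegrees A K)
    (B : ℕ → Ideal R)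
    (hB : B = reesGen (fun d =>
      ⨆ (n : ℕ) (_ : n ∈ K) (j : ℕ) (_ : j < n) (_ : n - j = d), deltaIter k j (A n)))
    (a b : ℕ) (hb : 0 < b) (hq : b ≤ a) :
    (∀ i : ℕ, 0 < i → ((a * i : ℕ) : ℕ∞) ≤ (b : ℕ∞) * idealOrd (A i)) ↔
    (∀ i : ℕ, 0 < i → ((a * i : ℕ) : ℕ∞) ≤ (b : ℕ∞) * idealOrd (B i)) := by
  subst hB
  set G : ℕ → Ideal R := fun d =>
      ⨆ (n : ℕ) (_ : n ∈ K) (j : ℕ) (_ : j < n) (_ : n - j = d), deltaIter k j (A n) with hG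
  set m : Ideal R := maximalIdeal R with hm
  have key : ∀ (I : Ideal R) (c : ℕ),
      ((c : ℕ∞) ≤ (b : ℕ∞) * idealOrd I ↔ I ≤ m ^ ((c + b - 1) / b)) := fun I c =>
    (my_cast_mul_le hb c _).trans (my_idealOrd_ge I _)
  simp only [key]
  have hceil : ∀ c x : ℕ, (c + b - 1) / b ≤ x ↔ c ≤ b * x := fun c x => my_ceil_le_iff hb c x
  constructor
  · -- A side implies B side
    intro hA i hi
    rw [reesGen, if_neg hi.ne']
    refine iSup_le fun t => iSup_le fun hsum => iSup_le fun _ => ?_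
    have hGd : ∀ d ∈ t, G d ≤ m ^ ((a * d + b - 1) / b) := by
      intro d _
      rw [hG]
      refine iSup_le fun n => iSup_le fun hn => iSup_le fun j => iSup_le fun hj =>
        iSup_le fun hd' => ?_
      have hAn : A n ≤ m ^ ((a * n + b - 1) / b) := hA n (hKpos n hn)
      refine (my_deltaIter_le j _ _ hAn).trans (Ideal.pow_le_pow_right ?_)
      -- (a*d + b - 1)/b ≤ (a*n + b - 1)/b - j
      set sn := (a * n + b - 1) / b with hsn
      have h1 : a * n ≤ b * sn := (hceil _ _).mp le_rfl
      have hnsn : n ≤ sn := by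
        have : b * n ≤ b * sn := le_trans (Nat.mul_le_mul_right n hq) h1
        exact Nat.le_of_mul_le_mul_left this hb
      have hjn : j ≤ n := hj.le
      have hjsn : j ≤ sn := hjn.trans hnsn
      rw [← hd']
      rw [hceil]
      -- goal : a * (n - j) ≤ b * (sn - j)
      obtain ⟨u, rfl⟩ : ∃ u, n = u + j := ⟨n - j, by omega⟩
      obtain ⟨v, hv⟩ : ∃ v, sn = v + j := ⟨sn - j, by omega⟩
      rw [hv] at h1
      rw [Nat.add_sub_cancel, hv, Nat.add_sub_cancel]
      have h3 : b * j ≤ a * j := Nat.mul_le_mul_right j hq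
      rw [Nat.mul_add, Nat.mul_add] at h1
      linarith
    refine (my_prod_le_pow G _ t hGd).trans (Ideal.pow_le_pow_right ?_)
    rw [← hsum]
    exact my_ceil_superadd hb t
  · -- B side implies A side
    intro hBc i hi
    refine le_trans ?_ (hBc i hi)
    rw [hgen i hi, reesGen, if_neg hi.ne']
    refine iSup_le fun t => iSup_le fun hK => iSup_le fun hsum => ?_
    have h0 : 0 ∉ t := fun h0 => absurd (hKpos 0 (hK 0 h0)) (lt_irrefl 0)
    refine le_trans (my_prod_mono A G t ?_) ?_
    · intro d hd
      have hdK : d ∈ K := hK d hd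
      have hdpos : 0 < d := hKpos d hdK
      have : A d = deltaIter k 0 (A d) := rfl
      rw [this, hG]
      exact le_iSup_of_le d (le_iSup_of_le hdK (le_iSup_of_le 0 (le_iSup_of_le hdpos
        (le_iSup_of_le rfl le_rfl))))
    · exact le_iSup_of_le t (le_iSup_of_le hsum (le_iSup_of_le h0 le_rfl))
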